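/- Tempered time-decay bound from local smoothing and uniform spatial decay: let v : ℝ × ℝ → ℝ be measurable and suppose (i) M := sup over unit intervals I ⊂ ℝ of ∫_{t∈ℝ} ∫_{y∈I} v(y,t)² dy dt < ∞, and (ii) there is C > 0 such that for every y₀ ≥ 1 and every t ∈ ℝ, ∫_{|y|≥y₀} v(y,t)² dy ≤ C/y₀. Then there is a constant C' (depending only on M and C) such that for every t₀ ∈ ℝ, ∫_{t∈ℝ} ⟨t−t₀⟩^{-4/5} ∫_{y∈ℝ} v(y,t)² dy dt ≤ C' < ∞. -/

import Mathlib

open MeasureTheory Set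

noncomputable section

def TDbr (n : ℤ) : ℝ := (2 / max |(n : ℝ)| 2) ^ 2

lemma TDbr_nonneg (n : ℤ) : 0 ≤ TDbr n := sq_nonneg _

lemma TDbrN_summable : Summable (fun n : ℕ => (2 / max (n : ℝ) 2) ^ 2) := by
  have h0 : Summable (fun n : ℕ => 1 / ((n : ℝ)) ^ 2) :=
    Real.summable_one_div_nat_pow.mpr one_lt_two
  have h1 : Summable (fun n : ℕ => 16 * (1 / ((n : ℝ) + 1) ^ 2)) := by
    have := (summable_nat_add_iff (f := fun n : ℕ => 1 / ((n : ℝ)) ^ 2) 1).mpr h0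
    exact (this.congr (fun n => by push_cast; ring)).mul_left 16
  refine Summable.of_nonneg_of_le (fun n => sq_nonneg _) (fun n => ?_) h1
  have hm0 : (0:ℝ) < max (n : ℝ) 2 := lt_of_lt_of_le two_pos (le_max_right _ _)
  have hmax : ((n : ℝ) + 1) / 2 ≤ max (n : ℝ) 2 := by
    rcases le_total ((n : ℝ)) 3 with h | h
    · have := le_max_right (n : ℝ) 2; linarith
    · have := le_max_left (n : ℝ) 2; linarith
  have hle : 2 / max (n : ℝ) 2 ≤ 4 / ((n : ℝ) + 1) := by
    rw [div_le_div_iff₀ hm0 (by positivity)]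
    linarith
  calc (2 / max (n : ℝ) 2) ^ 2 ≤ (4 / ((n : ℝ) + 1)) ^ 2 :=
        pow_le_pow_left₀ (by positivity) hle 2
    _ = 16 * (1 / ((n : ℝ) + 1) ^ 2) := by rw [div_pow]; ring

lemma TDbr_summable : Summable TDbr := by
  apply Summable.of_nat_of_neg
  · exact TDbrN_summable.congr (fun n => by
      simp [TDbr, abs_of_nonneg (show (0:ℝ) ≤ (n:ℝ) from n.cast_nonneg)])
  · exact TDbrN_summable.congr (fun n => by
      simp [TDbr, abs_of_nonneg (show (0:ℝ) ≤ (n:ℝ) from n.cast_nonneg)])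

def TDB : ℝ := ∑' n : ℤ, TDbr n

lemma TDB_nonneg : 0 ≤ TDB := tsum_nonneg TDbr_nonneg

lemma TDkernel_integrable : Integrable (fun s : ℝ => (1 + s ^ 2) ^ (-(3:ℝ)/5)) := by
  have h := integrable_rpow_neg_one_add_norm_sq (E := ℝ) (μ := volume) (r := 6/5)
    (by simp; norm_num)
  refine h.congr (Filter.Eventually.of_forall fun s => ?_)
  simp only [Real.norm_eq_abs, sq_abs]
  norm_num

def TDK : ℝ := ∫ s : ℝ, (1 + s ^ 2) ^ (-(3:ℝ)/5)

lemma TDK_nonneg : 0 ≤ TDK :=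
  integral_nonneg (fun s => Real.rpow_nonneg (by positivity) _)

/-- far-part time integral -/
lemma TDfar (C t₀ : ℝ) (hC : 0 ≤ C) :
    (∫⁻ t : ℝ, ENNReal.ofReal (C * (1 + (t - t₀) ^ 2) ^ (-(3:ℝ)/5)))
      = ENNReal.ofReal (C * TDK) := by
  have hint : Integrable (fun t : ℝ => C * (1 + (t - t₀) ^ 2) ^ (-(3:ℝ)/5)) :=
    (TDkernel_integrable.comp_sub_right t₀).const_mul C
  rw [← ofReal_integral_eq_lintegral_ofReal hint
    (Filter.Eventually.of_forall fun t =>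
      mul_nonneg hC (Real.rpow_nonneg (by positivity) _))]
  congr 1
  rw [integral_const_mul]
  congr 1
  exact integral_sub_right_eq_self (fun s : ℝ => (1 + s ^ 2) ^ (-(3:ℝ)/5)) t₀

/-- the pointwise (in time) estimate -/
lemma TDpointwise {C : ℝ} (hC : 0 < C) (gg : ℝ → ENNReal)
    (hdecay : ∀ y₀ : ℝ, 1 ≤ y₀ →
      (∫⁻ y in {y : ℝ | y₀ ≤ |y|}, gg y) ≤ ENNReal.ofReal (C / y₀)) (s : ℝ) :
    ENNReal.ofReal ((1 + s ^ 2) ^ (-(2:ℝ)/5)) * ∫⁻ y : ℝ, gg y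
      ≤ (∑' n : ℤ, ENNReal.ofReal (TDbr n) * ∫⁻ y in Icc (n:ℝ) ((n:ℝ)+1), gg y)
        + ENNReal.ofReal (C * (1 + s ^ 2) ^ (-(3:ℝ)/5)) := by
  have hP1 : (1:ℝ) ≤ 1 + s ^ 2 := by nlinarith [sq_nonneg s]
  have hP0 : (0:ℝ) < 1 + s ^ 2 := by linarith
  set A : ℝ := (1 + s ^ 2) ^ ((1:ℝ)/5) with hA
  have hA1 : (1:ℝ) ≤ A := Real.one_le_rpow hP1 (by norm_num)
  have hA0 : (0:ℝ) < A := by linarith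
  have hA2 : A ^ 2 = (1 + s ^ 2) ^ ((2:ℝ)/5) := by
    rw [hA, ← Real.rpow_natCast ((1 + s ^ 2) ^ ((1:ℝ)/5)) 2, ← Real.rpow_mul hP0.le]
    norm_num
  have hwA : (1 + s ^ 2) ^ (-(2:ℝ)/5) = (A ^ 2)⁻¹ := by
    rw [show (-(2:ℝ)/5) = -((2:ℝ)/5) by ring, Real.rpow_neg hP0.le, hA2]
  -- split the space integral
  have hsplit : (∫⁻ y : ℝ, gg y) ≤ (∫⁻ y in Icc (-A) A, gg y) + ENNReal.ofReal (C / A) := by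
    rw [← lintegral_add_compl (fun y => gg y) (measurableSet_Icc (a := -A) (b := A))]
    refine add_le_add_right ?_ _
    refine le_trans (lintegral_mono_set ?_) (hdecay A hA1)
    intro y hy
    simp only [mem_compl_iff, mem_Icc, not_and_or, not_le] at hy
    simp only [mem_setOf_eq]
    rcases hy with h | h
    · exact le_abs.2 (Or.inr (by linarith))
    · exact le_abs.2 (Or.inl h.le)
  have hnear : ENNReal.ofReal ((1 + s ^ 2) ^ (-(2:ℝ)/5)) * (∫⁻ y in Icc (-A) A, gg y)
      ≤ ∑' n : ℤ, ENNReal.ofReal (TDbr n) * ∫⁻ y in Icc (n:ℝ) ((n:ℝ)+1), gg y := by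
    have hsub : Icc (-A) A ⊆ ⋃ n : ℤ, (Icc (-A) A ∩ Icc (n:ℝ) ((n:ℝ)+1)) := by
      intro y hy
      exact mem_iUnion.2 ⟨⌊y⌋, hy, Int.floor_le y, (Int.lt_floor_add_one y).le⟩
    calc ENNReal.ofReal ((1 + s ^ 2) ^ (-(2:ℝ)/5)) * (∫⁻ y in Icc (-A) A, gg y)
        ≤ ENNReal.ofReal ((1 + s ^ 2) ^ (-(2:ℝ)/5)) *
            ∑' n : ℤ, ∫⁻ y in Icc (-A) A ∩ Icc (n:ℝ) ((n:ℝ)+1), gg y :=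
          mul_le_mul_right (le_trans (lintegral_mono_set hsub) (lintegral_iUnion_le _ _)) _
      _ = ∑' n : ℤ, ENNReal.ofReal ((1 + s ^ 2) ^ (-(2:ℝ)/5)) *
            ∫⁻ y in Icc (-A) A ∩ Icc (n:ℝ) ((n:ℝ)+1), gg y := ENNReal.tsum_mul_left.symm
      _ ≤ ∑' n : ℤ, ENNReal.ofReal (TDbr n) * ∫⁻ y in Icc (n:ℝ) ((n:ℝ)+1), gg y := by
          refine ENNReal.tsum_le_tsum (fun n => ?_)
          by_cases hne : (Icc (-A) A ∩ Icc (n:ℝ) ((n:ℝ)+1)).Nonempty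
          · obtain ⟨y, hyA, hyn⟩ := hne
            rw [mem_Icc] at hyA hyn
            have hm0 : (0:ℝ) < max |(n:ℝ)| 2 := lt_of_lt_of_le two_pos (le_max_right _ _)
            have hnA : max |(n:ℝ)| 2 ≤ 2 * A := by
              have h1' : (n:ℝ) ≤ A := le_trans hyn.1 hyA.2
              have habs : |(n:ℝ)| ≤ A + 1 := abs_le.2 ⟨by linarith [hyA.1, hyn.2], by linarith⟩
              exact max_le (by linarith) (by linarith)
            have hwle : (1 + s ^ 2) ^ (-(2:ℝ)/5) ≤ TDbr n := by
              rw [hwA]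
              have hsq : (max |(n:ℝ)| 2 / 2) ^ 2 ≤ A ^ 2 :=
                pow_le_pow_left₀ (by positivity) (by linarith) 2
              have hinv : (A ^ 2)⁻¹ ≤ ((max |(n:ℝ)| 2 / 2) ^ 2)⁻¹ :=
                inv_anti₀ (by positivity) hsq
              refine le_trans hinv (le_of_eq ?_)
              rw [TDbr]
              field_simp
            exact mul_le_mul' (ENNReal.ofReal_le_ofReal hwle)
              (lintegral_mono_set inter_subset_right)
          · rw [not_nonempty_iff_eq_empty.1 hne]
            simp
  have hfar : ENNReal.ofReal ((1 + s ^ 2) ^ (-(2:ℝ)/5)) * ENNReal.ofReal (C / A)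
      = ENNReal.ofReal (C * (1 + s ^ 2) ^ (-(3:ℝ)/5)) := by
    rw [← ENNReal.ofReal_mul (Real.rpow_nonneg hP0.le _)]
    congr 1
    have hCA : C / A = C * (1 + s ^ 2) ^ (-((1:ℝ)/5)) := by
      rw [hA, Real.rpow_neg hP0.le]
      ring
    rw [hCA, show (-(2:ℝ)/5) = -((2:ℝ)/5) by ring,
      show (-(3:ℝ)/5) = (-((2:ℝ)/5)) + (-((1:ℝ)/5)) by ring,
      Real.rpow_add hP0]
    ring
  calc ENNReal.ofReal ((1 + s ^ 2) ^ (-(2:ℝ)/5)) * ∫⁻ y : ℝ, gg y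
      ≤ ENNReal.ofReal ((1 + s ^ 2) ^ (-(2:ℝ)/5)) *
          ((∫⁻ y in Icc (-A) A, gg y) + ENNReal.ofReal (C / A)) :=
        mul_le_mul_right hsplit _
    _ = ENNReal.ofReal ((1 + s ^ 2) ^ (-(2:ℝ)/5)) * (∫⁻ y in Icc (-A) A, gg y)
          + ENNReal.ofReal ((1 + s ^ 2) ^ (-(2:ℝ)/5)) * ENNReal.ofReal (C / A) := by
        rw [mul_add]
    _ ≤ (∑' n : ℤ, ENNReal.ofReal (TDbr n) * ∫⁻ y in Icc (n:ℝ) ((n:ℝ)+1), gg y)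
          + ENNReal.ofReal (C * (1 + s ^ 2) ^ (-(3:ℝ)/5)) := by
        rw [hfar]
        exact add_le_add_left hnear _

lemma TDF_meas {v : ℝ → ℝ → ℝ} (hv : Measurable (Function.uncurry v)) (n : ℤ) :
    Measurable (fun t : ℝ =>
      ∫⁻ y in Icc (n:ℝ) ((n:ℝ)+1), ENNReal.ofReal ((v y t) ^ 2)) := by
  have hvm : Measurable fun q : ℝ × ℝ => ENNReal.ofReal ((v q.2 q.1) ^ 2) := by
    have h0 : Measurable fun q : ℝ × ℝ => v q.2 q.1 := hv.comp measurable_swap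
    exact (h0.pow_const 2).ennreal_ofReal
  have hs : MeasurableSet {q : ℝ × ℝ | q.2 ∈ Icc (n:ℝ) ((n:ℝ)+1)} :=
    measurable_snd measurableSet_Icc
  have h := Measurable.lintegral_prod_right' (ν := volume) (hvm.indicator hs)
  have heq : (fun t : ℝ => ∫⁻ y in Icc (n:ℝ) ((n:ℝ)+1), ENNReal.ofReal ((v y t) ^ 2))
      = fun t : ℝ => ∫⁻ y : ℝ,
          ({q : ℝ × ℝ | q.2 ∈ Icc (n:ℝ) ((n:ℝ)+1)}.indicator
            (fun q : ℝ × ℝ => ENNReal.ofReal ((v q.2 q.1) ^ 2))) (t, y) := by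
    funext t
    rw [← lintegral_indicator measurableSet_Icc]
    refine lintegral_congr fun y => ?_
    by_cases hy : y ∈ Icc (n:ℝ) ((n:ℝ)+1) <;>
      rw [mem_Icc] at hy <;> simp [Set.indicator_apply, hy]
  rw [heq]
  exact h

/-- **Tempered time-decay bound from local smoothing and uniform spatial decay.**
If `v(y,t)` satisfies (i) a uniform bound `M` on `∫_t ∫_{y∈I} v² ` over all unit intervals
`I`, and (ii) uniform-in-time spatial decay `∫_{|y|≥y₀} v(y,t)² dy ≤ C/y₀` for `y₀ ≥ 1`,
then there is `C'` (depending only on `M` and `C`) such that for every `t₀`,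
`∫_t ⟨t−t₀⟩^{−4/5} ∫_y v(y,t)² dy dt ≤ C' < ∞`. -/
theorem tempered_time_decay (M C : ℝ) (hM : 0 ≤ M) (hC : 0 < C) :
    ∃ C' : ℝ, ∀ v : ℝ → ℝ → ℝ,
      Measurable (Function.uncurry v) →
      -- (i) local smoothing bound over unit intervals
      (∀ a : ℝ, (∫⁻ t : ℝ, ∫⁻ y in Set.Icc a (a + 1), ENNReal.ofReal ((v y t)^2))
        ≤ ENNReal.ofReal M) →
      -- (ii) uniform-in-time spatial decay
      (∀ y₀ : ℝ, 1 ≤ y₀ → ∀ t : ℝ,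
        (∫⁻ y in {y : ℝ | y₀ ≤ |y|}, ENNReal.ofReal ((v y t)^2))
          ≤ ENNReal.ofReal (C / y₀)) →
      ∀ t₀ : ℝ,
        (∫⁻ t : ℝ, ENNReal.ofReal ((1 + (t - t₀)^2) ^ (-(2:ℝ)/5))
            * ∫⁻ y : ℝ, ENNReal.ofReal ((v y t)^2))
          ≤ ENNReal.ofReal C' := by
  refine ⟨TDB * M + C * TDK, ?_⟩
  intro v hv h1 h2 t₀
  have hΦm : Measurable fun t : ℝ =>
      ENNReal.ofReal (C * (1 + (t - t₀) ^ 2) ^ (-(3:ℝ)/5)) := by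
    have hc : Continuous fun t : ℝ => C * (1 + (t - t₀) ^ 2) ^ (-(3:ℝ)/5) := by
      refine continuous_const.mul (Continuous.rpow_const ?_ fun t => Or.inl ?_)
      · exact continuous_const.add ((continuous_id.sub continuous_const).pow 2)
      · positivity
    exact hc.measurable.ennreal_ofReal
  have key : ∀ t : ℝ,
      ENNReal.ofReal ((1 + (t - t₀) ^ 2) ^ (-(2:ℝ)/5)) * ∫⁻ y : ℝ, ENNReal.ofReal ((v y t) ^ 2)
        ≤ (∑' n : ℤ, ENNReal.ofReal (TDbr n) *
            ∫⁻ y in Icc (n:ℝ) ((n:ℝ)+1), ENNReal.ofReal ((v y t) ^ 2))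
          + ENNReal.ofReal (C * (1 + (t - t₀) ^ 2) ^ (-(3:ℝ)/5)) := by
    intro t
    exact TDpointwise hC (fun y => ENNReal.ofReal ((v y t) ^ 2))
      (fun y₀ hy₀ => h2 y₀ hy₀ t) (t - t₀)
  calc (∫⁻ t : ℝ, ENNReal.ofReal ((1 + (t - t₀) ^ 2) ^ (-(2:ℝ)/5))
          * ∫⁻ y : ℝ, ENNReal.ofReal ((v y t) ^ 2))
      ≤ ∫⁻ t : ℝ, ((∑' n : ℤ, ENNReal.ofReal (TDbr n) *
            ∫⁻ y in Icc (n:ℝ) ((n:ℝ)+1), ENNReal.ofReal ((v y t) ^ 2))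
          + ENNReal.ofReal (C * (1 + (t - t₀) ^ 2) ^ (-(3:ℝ)/5))) := lintegral_mono key
    _ = (∫⁻ t : ℝ, ∑' n : ℤ, ENNReal.ofReal (TDbr n) *
            ∫⁻ y in Icc (n:ℝ) ((n:ℝ)+1), ENNReal.ofReal ((v y t) ^ 2))
          + ∫⁻ t : ℝ, ENNReal.ofReal (C * (1 + (t - t₀) ^ 2) ^ (-(3:ℝ)/5)) :=
        lintegral_add_right _ hΦm
    _ ≤ ENNReal.ofReal (TDB * M) + ENNReal.ofReal (C * TDK) := by
        refine add_le_add ?_ (le_of_eq (TDfar C t₀ hC.le))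
        rw [lintegral_tsum (fun n => (((TDF_meas hv n).const_mul _)).aemeasurable)]
        calc (∑' n : ℤ, ∫⁻ t : ℝ, ENNReal.ofReal (TDbr n) *
                ∫⁻ y in Icc (n:ℝ) ((n:ℝ)+1), ENNReal.ofReal ((v y t) ^ 2))
            = ∑' n : ℤ, ENNReal.ofReal (TDbr n) *
                ∫⁻ t : ℝ, ∫⁻ y in Icc (n:ℝ) ((n:ℝ)+1), ENNReal.ofReal ((v y t) ^ 2) :=
              tsum_congr (fun n => lintegral_const_mul _ (TDF_meas hv n))
          _ ≤ ∑' n : ℤ, ENNReal.ofReal (TDbr n) * ENNReal.ofReal M :=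
              ENNReal.tsum_le_tsum (fun n => mul_le_mul_right (h1 (n:ℝ)) _)
          _ = (∑' n : ℤ, ENNReal.ofReal (TDbr n)) * ENNReal.ofReal M :=
              ENNReal.tsum_mul_right
          _ = ENNReal.ofReal TDB * ENNReal.ofReal M := by
              rw [← ENNReal.ofReal_tsum_of_nonneg TDbr_nonneg TDbr_summable]; rfl
          _ = ENNReal.ofReal (TDB * M) := (ENNReal.ofReal_mul TDB_nonneg).symm
    _ = ENNReal.ofReal (TDB * M + C * TDK) :=
        (ENNReal.ofReal_add (mul_nonneg TDB_nonneg hM) (mul_nonneg hC.le TDK_nonneg)).symm
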